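/- Let a₁, a₂ be complex constants and let V ⊆ ℂ be an open set not containing 0. Suppose q, p : ℂ → ℂ are differentiable on V and satisfy the KNY Hamiltonian system q'(s) = (2 p(s) q(s)² − q(s)² + (a₁+a₂) q(s) + s)/s and p'(s) = −(2 p(s)(p(s)−1) q(s) + (a₁+a₂) p(s) − a₂)/s for all s ∈ V. Let U ⊆ ℂ be an open set of points t with t ≠ 0 and t² ∈ V, and define x(t) = q(t²)/t on U. If q(t²) ≠ 0 for all t ∈ U, then x satisfies the third Painlevé equation x''(t) = x'(t)²/x(t) − x'(t)/t + (α x(t)² + β)/t + γ x(t)³ + δ/x(t) on U with parameters α = −4(a₁ − a₂), β = 4(1 − a₁ − a₂), γ = 4, δ = −4. -/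

import Mathlib

/-- If `(q, p)` solves the KNY Hamiltonian system on `V` and
`x(t) = q(t²)/t` on an open set `U` of points `t ≠ 0` with `t² ∈ V`, and `q(t²) ≠ 0`
on `U`, then `x` solves the third Painlevé equation with parameters
`α = −4(a₁ − a₂)`, `β = 4(1 − a₁ − a₂)`, `γ = 4`, `δ = −4`. -/
theorem KNY_system_gives_PIII (a₁ a₂ : ℂ) (V : Set ℂ)
    (hV : IsOpen V) (hV0 : (0 : ℂ) ∉ V) (q p : ℂ → ℂ)
    (hq : ∀ s ∈ V, HasDerivAt q
      ((2 * p s * (q s) ^ 2 - (q s) ^ 2 + (a₁ + a₂) * q s + s) / s) s)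
    (hp : ∀ s ∈ V, HasDerivAt p
      (-((2 * p s * (p s - 1) * q s + (a₁ + a₂) * p s - a₂) / s)) s)
    (U : Set ℂ) (hU : IsOpen U) (hUV : ∀ t ∈ U, t ≠ 0 ∧ t ^ 2 ∈ V)
    (x : ℂ → ℂ) (hx : ∀ t ∈ U, x t = q (t ^ 2) / t)
    (hqne : ∀ t ∈ U, q (t ^ 2) ≠ 0) :
    ∀ t ∈ U, deriv (deriv x) t =
      (deriv x t) ^ 2 / x t - deriv x t / t
        + ((-4 * (a₁ - a₂)) * (x t) ^ 2 + 4 * (1 - a₁ - a₂)) / t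
        + 4 * (x t) ^ 3 + (-4) / x t := by
  -- notation
  set A := a₁ + a₂ with hA
  -- derivative of u ↦ q (u^2) on U
  have hQ : ∀ u ∈ U, HasDerivAt (fun u => q (u ^ 2))
      (((2 * p (u ^ 2) * (q (u ^ 2)) ^ 2 - (q (u ^ 2)) ^ 2 + A * q (u ^ 2) + u ^ 2)
        / u ^ 2) * (2 * u)) u := by
    intro u hu
    have h := (hq (u ^ 2) (hUV u hu).2).comp u (hasDerivAt_pow 2 u)
    simpa [Function.comp_def] using h
  have hP : ∀ u ∈ U, HasDerivAt (fun u => p (u ^ 2))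
      ((-((2 * p (u ^ 2) * (p (u ^ 2) - 1) * q (u ^ 2) + A * p (u ^ 2) - a₂)
        / u ^ 2)) * (2 * u)) u := by
    intro u hu
    have h := (hp (u ^ 2) (hUV u hu).2).comp u (hasDerivAt_pow 2 u)
    simpa [Function.comp_def] using h
  -- the first derivative of x
  set D : ℂ → ℂ := fun u =>
    (2 * (2 * p (u ^ 2) * (q (u ^ 2)) ^ 2 - (q (u ^ 2)) ^ 2 + A * q (u ^ 2) + u ^ 2)
      - q (u ^ 2)) / u ^ 2 with hD
  have hxD : ∀ u ∈ U, HasDerivAt x (D u) u := by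
    intro u hu
    have hu0 : u ≠ 0 := (hUV u hu).1
    have h := (hQ u hu).div (hasDerivAt_id u) hu0
    have h2 : HasDerivAt (fun u => q (u ^ 2) / u) (D u) u := by
      refine h.congr_deriv ?_
      simp only [hD, id]
      field_simp
    exact h2.congr_of_eventuallyEq
      (Filter.eventuallyEq_of_mem (hU.mem_nhds hu) (fun v hv => hx v hv))
  have hderivx : ∀ u ∈ U, deriv x u = D u := fun u hu => (hxD u hu).deriv
  intro t ht
  obtain ⟨ht0, htV⟩ := hUV t ht
  have hQ0 : q (t ^ 2) ≠ 0 := hqne t ht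
  have ht20 : (t : ℂ) ^ 2 ≠ 0 := pow_ne_zero 2 ht0
  -- second derivative: deriv x agrees with D near t
  have hEq : deriv x =ᶠ[nhds t] D :=
    Filter.eventuallyEq_of_mem (hU.mem_nhds ht) (fun v hv => hderivx v hv)
  rw [hEq.deriv_eq, hx t ht, hderivx t ht]
  -- derivative of D at t via combinators
  have hN : HasDerivAt (fun u =>
      2 * p (u ^ 2) * (q (u ^ 2)) ^ 2 - (q (u ^ 2)) ^ 2 + A * q (u ^ 2) + u ^ 2)
      ((2 * ((-((2 * p (t ^ 2) * (p (t ^ 2) - 1) * q (t ^ 2) + A * p (t ^ 2) - a₂)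
          / t ^ 2)) * (2 * t)) * (q (t ^ 2)) ^ 2
        + 2 * p (t ^ 2) * ((2 : ℕ) * (q (t ^ 2)) ^ 1 *
          (((2 * p (t ^ 2) * (q (t ^ 2)) ^ 2 - (q (t ^ 2)) ^ 2 + A * q (t ^ 2) + t ^ 2)
            / t ^ 2) * (2 * t)))
        - (2 : ℕ) * (q (t ^ 2)) ^ 1 *
          (((2 * p (t ^ 2) * (q (t ^ 2)) ^ 2 - (q (t ^ 2)) ^ 2 + A * q (t ^ 2) + t ^ 2)
            / t ^ 2) * (2 * t))
        + A * (((2 * p (t ^ 2) * (q (t ^ 2)) ^ 2 - (q (t ^ 2)) ^ 2 + A * q (t ^ 2) + t ^ 2)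
            / t ^ 2) * (2 * t))
        + (2 : ℕ) * t ^ 1)) t := by
    exact ((((hP t ht).const_mul 2).mul ((hQ t ht).pow 2)).sub
      ((hQ t ht).pow 2)).add (((hQ t ht).const_mul A)) |>.add (hasDerivAt_pow 2 t)
  have hDd : HasDerivAt D
      ((D t) ^ 2 / (q (t ^ 2) / t) - D t / t
        + ((-4 * (a₁ - a₂)) * (q (t ^ 2) / t) ^ 2 + 4 * (1 - a₁ - a₂)) / t
        + 4 * (q (t ^ 2) / t) ^ 3 + (-4) / (q (t ^ 2) / t)) t := by
    have h := ((hN.const_mul 2).sub (hQ t ht)).div (hasDerivAt_pow 2 t) ht20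
    refine h.congr_deriv ?_
    simp only [hD, hA, Pi.sub_apply]
    have hc : t ^ 10 * q (t ^ 2) ≠ 0 := mul_ne_zero (pow_ne_zero _ ht0) hQ0
    have hD0 : (t ^ 2) ^ 2 * q (t ^ 2) * (t ^ 2 * t) * (t ^ 2 * t) ≠ 0 := by
      simp [ht0, hQ0, pow_ne_zero]
    apply mul_right_cancel₀ hc
    field_simp
    ring
  exact hDd.deriv
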